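/- arXiv:1604.05889 — 2 statements merged into one kernel-verified Lean document; each statement's English description precedes it below -/
import Mathlib

section
/- Let G be a finitely generated abelian group, r ≥ 1, and let H, K be subgroups of torsion-free rank exactly r with the same maximal rank-r subgroup containing them (the maximal subgroups of rank r containing H and K coincide). Then rank(H ∩ K) = r. -/
open scoped TensorProduct

/-- The torsion-free rank of an abelian group `A`: the dimension of `ℚ ⊗ A` over `ℚ`. -/
noncomputable def tfRank (A : Type*) [AddCommGroup A] : Cardinal :=
  Module.rank ℚ (ℚ ⊗[ℤ] A)

lemma tfRank_eq_intRank (A : Type*) [AddCommGroup A] :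
    Module.rank ℚ (ℚ ⊗[ℤ] A) = Module.rank ℤ A := by
  have : IsLocalizedModule (nonZeroDivisors ℤ) (TensorProduct.mk ℤ ℚ A 1) := by
    rw [isLocalizedModule_iff_isBaseChange (nonZeroDivisors ℤ) ℚ]
    exact TensorProduct.isBaseChange ℤ A ℚ
  exact (IsLocalization.rank_eq ℚ (nonZeroDivisors ℤ) le_rfl).trans (@IsLocalizedModule.rank_eq ℤ A _ _ _ (nonZeroDivisors ℤ) le_rfl (ℚ ⊗[ℤ] A) _ _ (TensorProduct.mk ℤ ℚ A 1) this)

theorem rank_inter_of_eq_max (G : Type*) [AddCommGroup G] [AddGroup.FG G]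
    (r : ℕ) (hr : 1 ≤ r) (H K M : AddSubgroup G)
    (hH : tfRank H = r) (hK : tfRank K = r) (hM : tfRank M = r)
    (hHM : H ≤ M) (hKM : K ≤ M)
    (hmax : ∀ J : AddSubgroup G, tfRank J = r → M ≤ J → J = M) :
    tfRank ↥(H ⊓ K) = r := by
  unfold tfRank at *
  rw [tfRank_eq_intRank] at hH hK hM ⊢
  set H' := AddSubgroup.toIntSubmodule H with hH'
  set K' := AddSubgroup.toIntSubmodule K with hK'
  set M' := AddSubgroup.toIntSubmodule M with hM'
  have eH : Module.rank ℤ H' = r := hH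
  have eK : Module.rank ℤ K' = r := hK
  have eM : Module.rank ℤ M' = r := hM
  have hsup : H' ⊔ K' ≤ M' := by
    rw [sup_le_iff]
    exact ⟨hHM, hKM⟩
  have hle : Module.rank ℤ ↥(H' ⊔ K') ≤ r := eM ▸ Submodule.rank_mono hsup
  have hinfle : Module.rank ℤ ↥(H' ⊓ K') ≤ r := eH ▸ Submodule.rank_mono inf_le_left
  have key := Submodule.rank_sup_add_rank_inf_eq H' K'
  rw [eH, eK] at key
  have hfin : (r : Cardinal) < Cardinal.aleph0 := Cardinal.nat_lt_aleph0 r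
  obtain ⟨n, hn⟩ := Cardinal.lt_aleph0.1 (hle.trans_lt hfin)
  obtain ⟨m, hm⟩ := Cardinal.lt_aleph0.1 (hinfle.trans_lt hfin)
  rw [hn] at key hle
  rw [hm] at key hinfle
  have key' : n + m = r + r := by exact_mod_cast key
  have hle' : n ≤ r := by exact_mod_cast hle
  have hinfle' : m ≤ r := by exact_mod_cast hinfle
  have : Module.rank ℤ ↥(H' ⊓ K') = r := by
    rw [hm]; norm_cast; omega
  have : Module.rank ℤ ↥(AddSubgroup.toIntSubmodule (H ⊓ K)) = r := by
    rwa [show AddSubgroup.toIntSubmodule (H ⊓ K) = H' ⊓ K' from rfl]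
  exact this
end

section
/- Let G be a finitely generated abelian group and H, K subgroups of torsion-free rank exactly r ≥ 1 with rank(H ∩ K) = r. Then the unique maximal rank-r subgroups containing H and K coincide: H_max = K_max. -/
open scoped TensorProduct

section Aux

instance : Module.Flat ℤ ℚ := IsLocalization.flat ℚ (nonZeroDivisors ℤ)

variable {G : Type*} [AddCommGroup G]

/-- The ℚ-subspace of `ℚ ⊗ G` spanned by a subgroup. -/
noncomputable def qspan (H : AddSubgroup G) : Submodule ℚ (ℚ ⊗[ℤ] G) :=
  (AddSubgroup.toIntSubmodule H).baseChange ℚ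

lemma range_baseChange_eq_qspan (H : AddSubgroup G) :
    LinearMap.range ((H.subtype.toIntLinearMap).baseChange ℚ) = qspan H := by
  apply le_antisymm
  · rintro x ⟨y, rfl⟩
    induction y using TensorProduct.induction_on with
    | zero => simp
    | tmul a m =>
        simpa [qspan] using Submodule.tmul_mem_baseChange_of_mem a
          (show (m : G) ∈ AddSubgroup.toIntSubmodule H from m.2)
    | add x y hx hy => rw [map_add]; exact Submodule.add_mem _ hx hy
  · rw [qspan, Submodule.baseChange_eq_span, Submodule.span_le]
    rintro - ⟨m, hm, rfl⟩
    exact LinearMap.mem_range.mpr ⟨(1 : ℚ) ⊗ₜ (⟨m, hm⟩ : H), rfl⟩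

lemma tfRank_eq_rank_qspan (H : AddSubgroup G) :
    tfRank H = Module.rank ℚ (qspan H) := by
  have hinj : Function.Injective ((H.subtype.toIntLinearMap).baseChange ℚ) := by
    have : Function.Injective (LinearMap.lTensor ℚ (H.subtype.toIntLinearMap)) :=
      Module.Flat.lTensor_preserves_injective_linearMap _ Subtype.val_injective
    rwa [LinearMap.baseChange_eq_ltensor]
  have e := (LinearEquiv.ofInjective _ hinj).rank_eq
  rw [tfRank, e, range_baseChange_eq_qspan]

lemma qspan_mono {H K : AddSubgroup G} (h : H ≤ K) : qspan H ≤ qspan K := by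
  rw [qspan, qspan, Submodule.baseChange_eq_span, Submodule.baseChange_eq_span]
  apply Submodule.span_mono
  exact Set.image_mono (fun x hx => h hx)

lemma qspan_sup (H K : AddSubgroup G) : qspan (H ⊔ K) = qspan H ⊔ qspan K := by
  apply le_antisymm
  · rw [qspan, Submodule.baseChange_eq_span, Submodule.span_le]
    rintro - ⟨m, hm, rfl⟩
    have hm' : m ∈ H ⊔ K := hm
    rw [AddSubgroup.mem_sup] at hm'
    obtain ⟨x, hx, y, hy, rfl⟩ := hm'
    have : (TensorProduct.mk ℤ ℚ G 1) (x + y)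
        = (1 : ℚ) ⊗ₜ[ℤ] x + (1 : ℚ) ⊗ₜ[ℤ] y := by
      simp [TensorProduct.tmul_add]
    rw [this]
    exact Submodule.add_mem _
      (Submodule.mem_sup_left (Submodule.tmul_mem_baseChange_of_mem _ hx))
      (Submodule.mem_sup_right (Submodule.tmul_mem_baseChange_of_mem _ hy))
  · exact sup_le (qspan_mono le_sup_left) (qspan_mono le_sup_right)

end Aux

theorem max_eq_of_rank_inter (G : Type*) [AddCommGroup G] [AddGroup.FG G]
    (r : ℕ) (hr : 1 ≤ r) (H K MH MK : AddSubgroup G)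
    (hH : tfRank H = r) (hK : tfRank K = r)
    (hHK : tfRank ↥(H ⊓ K) = r)
    (hMH : tfRank MH = r) (hHMH : H ≤ MH)
    (hMHmax : ∀ J : AddSubgroup G, tfRank J = r → MH ≤ J → J = MH)
    (hMK : tfRank MK = r) (hKMK : K ≤ MK)
    (hMKmax : ∀ J : AddSubgroup G, tfRank J = r → MK ≤ J → J = MK) :
    MH = MK := by
  -- ranks of the ℚ-spans
  have hqMH : Module.rank ℚ (qspan MH) = r := by
    rw [← tfRank_eq_rank_qspan]; exact hMH
  have hqMK : Module.rank ℚ (qspan MK) = r := by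
    rw [← tfRank_eq_rank_qspan]; exact hMK
  -- the intersection of the spans has rank exactly r
  have hHKle : qspan (H ⊓ K) ≤ qspan MH ⊓ qspan MK :=
    le_inf (qspan_mono (inf_le_left.trans hHMH)) (qspan_mono (inf_le_right.trans hKMK))
  have hinf : Module.rank ℚ ↥(qspan MH ⊓ qspan MK) = r := by
    apply le_antisymm
    · rw [← hqMH]; exact Submodule.rank_mono inf_le_left
    · rw [← hHK, tfRank_eq_rank_qspan]; exact Submodule.rank_mono hHKle
  -- hence the sup of the spans has rank r
  have hsum := Submodule.rank_sup_add_rank_inf_eq (qspan MH) (qspan MK)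
  rw [hinf, hqMH, hqMK] at hsum
  have hsup : Module.rank ℚ ↥(qspan MH ⊔ qspan MK) = r :=
    Cardinal.eq_of_add_eq_add_right hsum (Cardinal.nat_lt_aleph0 r)
  -- so MH ⊔ MK has torsion-free rank r
  have hMHK : tfRank ↥(MH ⊔ MK) = r := by
    rw [tfRank_eq_rank_qspan, qspan_sup, hsup]
  have h1 : MH ⊔ MK = MH := hMHmax _ hMHK le_sup_left
  have h2 : MH ⊔ MK = MK := hMKmax _ hMHK le_sup_right
  rw [← h1, h2]
end
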